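/- Define the polynomial x_poly(u,p) = −(5π/26)·((3u⁴ − 12u² + 10)·p + 8(u² − 1)·p³ + (8/5)·p⁵). Then: (i) x_poly satisfies the Euler–Poisson–Darboux equation u·((x_poly)_uu − (x_poly)_pp) + (x_poly)_u = 0 at every point (u,p) ∈ ℝ²; (ii) the partial derivative with respect to p at u = 1 satisfies (x_poly)_p(1,p) = −(5π/26)·(1 + 8p⁴) < 0 for every p ∈ [−1,1]; and (iii) (x_poly)_p(3/2, 0) = 145π/416 > 0. -/

import Mathlib

/-- Partial derivative with respect to the first variable (here `u`). -/
noncomputable def pd1 (f : ℝ → ℝ → ℝ) (u p : ℝ) : ℝ := deriv (fun u' => f u' p) u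

/-- Partial derivative with respect to the second variable (here `p`). -/
noncomputable def pd2 (f : ℝ → ℝ → ℝ) (u p : ℝ) : ℝ := deriv (fun p' => f u p') p

/-- The exact polynomial solution
`x_poly(u,p) = −(5π/26)·((3u⁴ − 12u² + 10)p + 8(u² − 1)p³ + (8/5)p⁵)`. -/
noncomputable def xpoly (u p : ℝ) : ℝ :=
  -(5 * Real.pi / 26) * ((3 * u ^ 4 - 12 * u ^ 2 + 10) * p
    + 8 * (u ^ 2 - 1) * p ^ 3 + (8 / 5) * p ^ 5)

lemma deriv_quintic (a b c d e f x : ℝ) :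
    deriv (fun t : ℝ => a * t ^ 5 + b * t ^ 4 + c * t ^ 3 + d * t ^ 2 + e * t + f) x
      = 5 * a * x ^ 4 + 4 * b * x ^ 3 + 3 * c * x ^ 2 + 2 * d * x + e := by
  have h : HasDerivAt (fun t : ℝ => a * t ^ 5 + b * t ^ 4 + c * t ^ 3 + d * t ^ 2 + e * t + f)
      (5 * a * x ^ 4 + 4 * b * x ^ 3 + 3 * c * x ^ 2 + 2 * d * x + e) x := by
    have h5 := (hasDerivAt_pow 5 x).const_mul a
    have h4 := (hasDerivAt_pow 4 x).const_mul b
    have h3 := (hasDerivAt_pow 3 x).const_mul c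
    have h2 := (hasDerivAt_pow 2 x).const_mul d
    have h1 := (hasDerivAt_id x).const_mul e
    have := ((((h5.add h4).add h3).add h2).add h1).add_const f
    refine this.congr_deriv ?_
    norm_num
    ring
  exact h.deriv

lemma pd1_xpoly (u p : ℝ) :
    pd1 xpoly u p = -(5 * Real.pi / 26) * ((12 * u ^ 3 - 24 * u) * p + 16 * u * p ^ 3) := by
  unfold pd1
  have hfun : (fun u' => xpoly u' p) = fun t : ℝ =>
      (0 : ℝ) * t ^ 5 + (-(5 * Real.pi / 26) * (3 * p)) * t ^ 4 + 0 * t ^ 3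
        + (-(5 * Real.pi / 26) * (-12 * p + 8 * p ^ 3)) * t ^ 2 + 0 * t
        + (-(5 * Real.pi / 26) * (10 * p - 8 * p ^ 3 + (8 / 5) * p ^ 5)) := by
    funext t; unfold xpoly; ring
  rw [hfun, deriv_quintic]; ring

lemma pd2_xpoly (u p : ℝ) :
    pd2 xpoly u p = -(5 * Real.pi / 26) *
      ((3 * u ^ 4 - 12 * u ^ 2 + 10) + 24 * (u ^ 2 - 1) * p ^ 2 + 8 * p ^ 4) := by
  unfold pd2
  have hfun : (fun p' => xpoly u p') = fun t : ℝ =>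
      (-(5 * Real.pi / 26) * (8 / 5)) * t ^ 5 + 0 * t ^ 4
        + (-(5 * Real.pi / 26) * (8 * (u ^ 2 - 1))) * t ^ 3 + 0 * t ^ 2
        + (-(5 * Real.pi / 26) * (3 * u ^ 4 - 12 * u ^ 2 + 10)) * t + 0 := by
    funext t; unfold xpoly; ring
  rw [hfun, deriv_quintic]; ring

lemma pd11_xpoly (u p : ℝ) :
    pd1 (pd1 xpoly) u p = -(5 * Real.pi / 26) * ((36 * u ^ 2 - 24) * p + 16 * p ^ 3) := by
  show deriv (fun u' => pd1 xpoly u' p) u = _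
  have hfun : (fun u' => pd1 xpoly u' p) = fun t : ℝ =>
      (0 : ℝ) * t ^ 5 + 0 * t ^ 4 + (-(5 * Real.pi / 26) * (12 * p)) * t ^ 3 + 0 * t ^ 2
        + (-(5 * Real.pi / 26) * (-24 * p + 16 * p ^ 3)) * t + 0 := by
    funext t; rw [pd1_xpoly]; ring
  rw [hfun, deriv_quintic]; ring

lemma pd22_xpoly (u p : ℝ) :
    pd2 (pd2 xpoly) u p = -(5 * Real.pi / 26) * (48 * (u ^ 2 - 1) * p + 32 * p ^ 3) := by
  show deriv (fun p' => pd2 xpoly u p') p = _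
  have hfun : (fun p' => pd2 xpoly u p') = fun t : ℝ =>
      (0 : ℝ) * t ^ 5 + (-(5 * Real.pi / 26) * 8) * t ^ 4 + 0 * t ^ 3
        + (-(5 * Real.pi / 26) * (24 * (u ^ 2 - 1))) * t ^ 2 + 0 * t
        + (-(5 * Real.pi / 26) * (3 * u ^ 4 - 12 * u ^ 2 + 10)) := by
    funext t; rw [pd2_xpoly]; ring
  rw [hfun, deriv_quintic]; ring

/-- (i) `x_poly` satisfies the Euler–Poisson–Darboux equation
`u·(x_uu − x_pp) + x_u = 0` everywhere; (ii) `(x_poly)_p(1,p) = −(5π/26)(1 + 8p⁴) < 0`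
for `p ∈ [−1,1]`; (iii) `(x_poly)_p(3/2, 0) = 145π/416 > 0`. -/
theorem fold_singularity_birth :
    (∀ u p : ℝ,
      u * (pd1 (pd1 xpoly) u p - pd2 (pd2 xpoly) u p) + pd1 xpoly u p = 0) ∧
    (∀ p ∈ Set.Icc (-1 : ℝ) 1,
      pd2 xpoly 1 p = -(5 * Real.pi / 26) * (1 + 8 * p ^ 4) ∧ pd2 xpoly 1 p < 0) ∧
    (pd2 xpoly (3 / 2) 0 = 145 * Real.pi / 416 ∧ 0 < pd2 xpoly (3 / 2) 0) := by
  refine ⟨fun u p => ?_, fun p _ => ⟨?_, ?_⟩, ?_, ?_⟩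
  · rw [pd11_xpoly, pd22_xpoly, pd1_xpoly]; ring
  · rw [pd2_xpoly]; ring
  · rw [pd2_xpoly]
    have hπ := Real.pi_pos
    nlinarith [pow_nonneg (sq_nonneg p) 2, sq_nonneg p, sq_nonneg (p ^ 2)]
  · rw [pd2_xpoly]; ring
  · rw [pd2_xpoly]
    have hπ := Real.pi_pos
    nlinarith
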